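/- Let Ψ be a p×p real positive definite diagonal matrix, let S be a p×p real symmetric positive semidefinite matrix, and set G = Ψ^{-1/2} S Ψ^{-1/2}. Suppose G = V·diag(θ)·Vᵀ with V orthogonal and θ : Fin p → ℝ monotonically decreasing. Fix q < p and assume θ_q ≥ 1. With V₁ the first q columns of V, Δ = diag(√(θ_j − 1)) (j = 1,…,q), and Λ̂ = Ψ^{1/2} V₁ Δ, one has log det(Λ̂Λ̂ᵀ + Ψ) + tr((Λ̂Λ̂ᵀ + Ψ)⁻¹ S) = log det Ψ + tr(Ψ⁻¹ S) + Σ_{j=1}^{q} (log θ_j − θ_j + 1). -/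

import Mathlib

open Matrix

private lemma aux_sum {p q : ℕ} (hq : q ≤ p) (g : Fin p → ℝ)
    (hg : ∀ j : Fin p, q ≤ (j : ℕ) → g j = 0) :
    ∑ j, g j = ∑ j : Fin q, g (Fin.castLE hq j) := by
  classical
  rw [← Finset.sum_image (f := g) (g := Fin.castLE hq)
    (fun a _ b _ h => Fin.castLE_injective hq h)]
  refine (Finset.sum_subset (Finset.subset_univ _) ?_).symm
  intro x _ hx
  refine hg x ?_
  by_contra h
  push_neg at h
  exact hx (Finset.mem_image.mpr ⟨⟨x, h⟩, Finset.mem_univ _, rfl⟩)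

/-- Result 1 (profile value): if the `q` leading eigenvalues of
`G = Ψ^{-1/2} S Ψ^{-1/2}` are at least `1`, then at the optimal loading
`Λ̂ = Ψ^{1/2} V₁ Δ` with `Δ = diag(√(θ_j − 1))`,
`log det(Λ̂Λ̂ᵀ + Ψ) + tr((Λ̂Λ̂ᵀ + Ψ)⁻¹ S)
  = log det Ψ + tr(Ψ⁻¹ S) + ∑_{j≤q} (log θ_j − θ_j + 1)`. -/
theorem profile_Q_value {p q : ℕ} (hq : q < p)
    (Ψ Ψh S : Matrix (Fin p) (Fin p) ℝ)
    (hΨ : Ψ.PosDef) (hΨdiag : Ψ.IsDiag)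
    (hΨh : Ψh.PosDef) (hΨhsq : Ψh * Ψh = Ψ)
    (hS : S.PosSemidef)
    (G : Matrix (Fin p) (Fin p) ℝ) (hG : G = Ψh⁻¹ * S * Ψh⁻¹)
    (V : Matrix (Fin p) (Fin p) ℝ) (hV : V ∈ Matrix.orthogonalGroup (Fin p) ℝ)
    (θ : Fin p → ℝ) (hθdec : Antitone θ)
    (hGeig : G = V * Matrix.diagonal θ * Vᵀ)
    (hθq : ∀ j : Fin q, 1 ≤ θ (Fin.castLE hq.le j))
    (V₁ : Matrix (Fin p) (Fin q) ℝ)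
    (hV₁ : V₁ = Matrix.of fun i j => V i (Fin.castLE hq.le j))
    (Δ : Matrix (Fin q) (Fin q) ℝ)
    (hΔ : Δ = Matrix.diagonal fun j => Real.sqrt (θ (Fin.castLE hq.le j) - 1))
    (Λhat : Matrix (Fin p) (Fin q) ℝ) (hΛhat : Λhat = Ψh * V₁ * Δ) :
    Real.log (Λhat * Λhatᵀ + Ψ).det + ((Λhat * Λhatᵀ + Ψ)⁻¹ * S).trace
      = Real.log Ψ.det + (Ψ⁻¹ * S).trace
        + ∑ j : Fin q, (Real.log (θ (Fin.castLE hq.le j))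
            - θ (Fin.castLE hq.le j) + 1) := by
  classical
  -- basic facts
  have hΨhT : Ψhᵀ = Ψh := by
    have h := hΨh.1
    rwa [Matrix.IsHermitian, Matrix.conjTranspose_eq_transpose_of_trivial] at h
  have hVVt : V * Vᵀ = 1 := by
    have h := (Matrix.mem_orthogonalGroup_iff (n := Fin p) (R := ℝ)).mp hV
    exact h
  have hVtV : Vᵀ * V = 1 := by
    have h := (Matrix.mem_orthogonalGroup_iff' (n := Fin p) (R := ℝ)).mp hV
    exact h
  have hdetΨh : IsUnit Ψh.det := (isUnit_iff_ne_zero).mpr hΨh.det_pos.ne'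
  have hθ1 : ∀ j : Fin p, (j : ℕ) < q → 1 ≤ θ j := by
    intro j h
    have e : Fin.castLE hq.le ⟨j.1, h⟩ = j := Fin.ext rfl
    have := hθq ⟨j.1, h⟩
    rwa [e] at this
  set d : Fin p → ℝ := fun j => if (j : ℕ) < q then θ j else 1 with hd
  have hd1 : ∀ j, 0 < d j := by
    intro j
    by_cases h : (j : ℕ) < q
    · simp only [hd, if_pos h]; linarith [hθ1 j h]
    · simp only [hd, if_neg h]; norm_num
  -- the key matrix identity
  have hΔΔ : Δ * Δ = Matrix.diagonal (fun j : Fin q => θ (Fin.castLE hq.le j) - 1) := by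
    rw [hΔ, Matrix.diagonal_mul_diagonal]
    exact congrArg Matrix.diagonal
      (funext fun j => Real.mul_self_sqrt (by linarith [hθq j]))
  set m : Fin p → ℝ := fun j => if (j : ℕ) < q then θ j - 1 else 0 with hm
  have hkey : V₁ * (Δ * Δ) * V₁ᵀ = V * Matrix.diagonal m * Vᵀ := by
    rw [hΔΔ, hV₁, Matrix.mul_assoc, Matrix.mul_assoc]
    ext i k
    simp only [Matrix.mul_apply, Matrix.diagonal_apply, ite_mul, zero_mul,
      Finset.sum_ite_eq, Finset.mem_univ, if_true, Matrix.transpose_apply, Matrix.of_apply]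
    rw [aux_sum hq.le (fun j => V i j * (m j * V k j))
      (fun j hj => by simp [hm, Nat.not_lt.mpr hj])]
    refine Finset.sum_congr rfl fun j _ => ?_
    have : m (Fin.castLE hq.le j) = θ (Fin.castLE hq.le j) - 1 := by
      simp [hm, j.2]
    rw [this]
  have hA : V₁ * (Δ * Δ) * V₁ᵀ + 1 = V * Matrix.diagonal d * Vᵀ := by
    have hdm : Matrix.diagonal d = Matrix.diagonal m + 1 := by
      have h1 : (fun i => m i + 1) = d := by
        funext j; by_cases h : (j : ℕ) < q <;> simp [hd, hm, h] <;> ring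
      rw [← Matrix.diagonal_one, Matrix.diagonal_add, h1]
    rw [hkey, hdm, Matrix.mul_add, Matrix.add_mul, Matrix.mul_one, hVVt]
  have hM : Λhat * Λhatᵀ + Ψ = Ψh * (V * Matrix.diagonal d * Vᵀ) * Ψh := by
    have hΔT : Δᵀ = Δ := by rw [hΔ, Matrix.diagonal_transpose]
    rw [hΛhat, Matrix.transpose_mul, Matrix.transpose_mul, hΨhT, hΔT, ← hA, ← hΨhsq]
    simp [Matrix.mul_add, Matrix.add_mul, Matrix.mul_assoc]
  -- determinant
  have hdet2 : V.det * V.det = 1 := by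
    have := congrArg Matrix.det hVVt
    rwa [Matrix.det_mul, Matrix.det_transpose, Matrix.det_one] at this
  have hdVdV : (V * Matrix.diagonal d * Vᵀ).det = ∏ j, d j := by
    rw [Matrix.det_mul, Matrix.det_mul, Matrix.det_diagonal, Matrix.det_transpose]
    calc (V.det * ∏ j, d j) * V.det = (V.det * V.det) * ∏ j, d j := by ring
    _ = ∏ j, d j := by rw [hdet2, one_mul]
  have hdetM : (Λhat * Λhatᵀ + Ψ).det = Ψ.det * ∏ j, d j := by
    rw [hM, Matrix.det_mul, Matrix.det_mul, hdVdV, ← hΨhsq, Matrix.det_mul]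
    ring
  have hprodpos : (0:ℝ) < ∏ j, d j := Finset.prod_pos fun j _ => hd1 j
  have hlogdet : Real.log (Λhat * Λhatᵀ + Ψ).det
      = Real.log Ψ.det + ∑ j : Fin q, Real.log (θ (Fin.castLE hq.le j)) := by
    rw [hdetM, Real.log_mul hΨ.det_pos.ne' hprodpos.ne',
      Real.log_prod (fun j _ => (hd1 j).ne')]
    congr 1
    rw [aux_sum hq.le (fun j => Real.log (d j))
      (fun j hj => by simp [hd, Nat.not_lt.mpr hj])]
    refine Finset.sum_congr rfl fun j _ => ?_
    have : d (Fin.castLE hq.le j) = θ (Fin.castLE hq.le j) := by simp [hd, j.2]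
    rw [this]
  -- inverse
  have hdd : Matrix.diagonal d * Matrix.diagonal (fun j => (d j)⁻¹) = 1 := by
    rw [Matrix.diagonal_mul_diagonal]
    have h1 : (fun i => d i * (d i)⁻¹) = fun _ : Fin p => (1:ℝ) :=
      funext fun j => mul_inv_cancel₀ (hd1 j).ne'
    rw [h1]
    exact Matrix.diagonal_one
  have hAinv : (V * Matrix.diagonal d * Vᵀ)⁻¹
      = V * Matrix.diagonal (fun j => (d j)⁻¹) * Vᵀ := by
    apply Matrix.inv_eq_right_inv
    calc (V * Matrix.diagonal d * Vᵀ) * (V * Matrix.diagonal (fun j => (d j)⁻¹) * Vᵀ)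
        = V * (Matrix.diagonal d * ((Vᵀ * V) * (Matrix.diagonal (fun j => (d j)⁻¹) * Vᵀ))) := by
          simp [Matrix.mul_assoc]
      _ = V * ((Matrix.diagonal d * Matrix.diagonal (fun j => (d j)⁻¹)) * Vᵀ) := by
          rw [hVtV, one_mul, Matrix.mul_assoc]
      _ = 1 := by rw [hdd, one_mul, hVVt]
  have hΨinv : Ψ⁻¹ = Ψh⁻¹ * Ψh⁻¹ := by rw [← hΨhsq, Matrix.mul_inv_rev]
  have hMinv : (Λhat * Λhatᵀ + Ψ)⁻¹
      = Ψh⁻¹ * (V * Matrix.diagonal (fun j => (d j)⁻¹) * Vᵀ) * Ψh⁻¹ := by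
    rw [hM, Matrix.mul_inv_rev, Matrix.mul_inv_rev, hAinv]
    simp [Matrix.mul_assoc]
  -- traces
  have hVGV : Vᵀ * G * V = Matrix.diagonal θ := by
    rw [hGeig]
    calc Vᵀ * (V * Matrix.diagonal θ * Vᵀ) * V
        = (Vᵀ * V) * Matrix.diagonal θ * (Vᵀ * V) := by simp [Matrix.mul_assoc]
      _ = Matrix.diagonal θ := by rw [hVtV, one_mul, mul_one]
  have htrG : G.trace = ∑ j, θ j := by
    rw [hGeig, Matrix.mul_assoc, Matrix.trace_mul_comm, Matrix.mul_assoc, hVtV,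
      Matrix.mul_one, Matrix.trace_diagonal]
  have htrΨ : (Ψ⁻¹ * S).trace = ∑ j, θ j := by
    rw [hΨinv, Matrix.mul_assoc, Matrix.trace_mul_comm, ← hG, htrG]
  have htrM : ((Λhat * Λhatᵀ + Ψ)⁻¹ * S).trace = ∑ j, θ j * (d j)⁻¹ := by
    have keyM : (Λhat * Λhatᵀ + Ψ)⁻¹ * S
        = (Ψh⁻¹ * V * Matrix.diagonal (fun j => (d j)⁻¹)) * (Vᵀ * Ψh⁻¹ * S) := by
      rw [hMinv]; simp [Matrix.mul_assoc]
    rw [keyM, Matrix.trace_mul_comm]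
    have keyN : (Vᵀ * Ψh⁻¹ * S) * (Ψh⁻¹ * V * Matrix.diagonal (fun j => (d j)⁻¹))
        = (Vᵀ * G * V) * Matrix.diagonal (fun j => (d j)⁻¹) := by
      rw [hG]; simp [Matrix.mul_assoc]
    rw [keyN, hVGV, Matrix.diagonal_mul_diagonal, Matrix.trace_diagonal]
  -- arithmetic
  have hsplit : ∑ j, θ j * (d j)⁻¹
      = ∑ j, θ j + ∑ j : Fin q, (1 - θ (Fin.castLE hq.le j)) := by
    have h1 : ∑ j, (θ j * (d j)⁻¹ - θ j) = ∑ j : Fin q, (1 - θ (Fin.castLE hq.le j)) := by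
      rw [aux_sum hq.le (fun j => θ j * (d j)⁻¹ - θ j)
        (fun j hj => by simp [hd, Nat.not_lt.mpr hj])]
      refine Finset.sum_congr rfl fun j _ => ?_
      have hdj : d (Fin.castLE hq.le j) = θ (Fin.castLE hq.le j) := by simp [hd, j.2]
      have hne : θ (Fin.castLE hq.le j) ≠ 0 := by linarith [hθq j]
      simp only [hdj]
      field_simp
    have h2 : ∑ j, (θ j * (d j)⁻¹ - θ j) = ∑ j, θ j * (d j)⁻¹ - ∑ j, θ j :=
      Finset.sum_sub_distrib _ _
    linarith [h1, h2]
  have hfin : ∑ j : Fin q, (Real.log (θ (Fin.castLE hq.le j)) - θ (Fin.castLE hq.le j) + 1)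
      = ∑ j : Fin q, Real.log (θ (Fin.castLE hq.le j))
        + ∑ j : Fin q, (1 - θ (Fin.castLE hq.le j)) := by
    rw [← Finset.sum_add_distrib]
    exact Finset.sum_congr rfl fun j _ => by ring
  rw [hlogdet, htrM, htrΨ, hsplit, hfin]
  ring
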